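/- If (f_n) is a frame in H with analysis operator U, and T : H → K is a bounded surjection onto a Hilbert space K, then (T f_n) is a frame in K whose analysis operator is U T*, and the excess satisfies e(f_n) ≤ e(T f_n), i.e. dim(Ker U*) ≤ dim(Ker(T U*)). -/

import Mathlib

open scoped InnerProductSpace

noncomputable section

abbrev ell2 : Type := lp (fun _ : ℕ => ℂ) 2

def IsFrame {H : Type*} [NormedAddCommGroup H] [InnerProductSpace ℂ H]
    (f : ℕ → H) : Prop :=
  ∃ A B : ℝ, 0 < A ∧ 0 < B ∧ ∀ x : H,
    A * ‖x‖ ^ 2 ≤ ∑' n, ‖⟪x, f n⟫_ℂ‖ ^ 2 ∧ ∑' n, ‖⟪x, f n⟫_ℂ‖ ^ 2 ≤ B * ‖x‖ ^ 2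

def IsAnalysisOp {H : Type*} [NormedAddCommGroup H] [InnerProductSpace ℂ H]
    (f : ℕ → H) (U : H →L[ℂ] ell2) : Prop :=
  ∀ (x : H) (n : ℕ), (U x : ∀ _ : ℕ, ℂ) n = ⟪x, f n⟫_ℂ

/-- Image of a frame under a bounded surjection is a frame with analysis
operator `U T*`, and the excess does not decrease. -/
theorem excess_le_of_surjection
    {H K : Type*} [NormedAddCommGroup H] [InnerProductSpace ℂ H] [CompleteSpace H]
    [NormedAddCommGroup K] [InnerProductSpace ℂ K] [CompleteSpace K]
    (f : ℕ → H) (hf : IsFrame f)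
    (U : H →L[ℂ] ell2) (hU : IsAnalysisOp f U)
    (T : H →L[ℂ] K) (hT : Function.Surjective T) :
    IsFrame (fun n => T (f n)) ∧
      IsAnalysisOp (fun n => T (f n)) (U ∘L ContinuousLinearMap.adjoint T) ∧
      Module.rank ℂ (LinearMap.ker (ContinuousLinearMap.adjoint U : ell2 →ₗ[ℂ] H)) ≤
        Module.rank ℂ (LinearMap.ker ((T ∘L ContinuousLinearMap.adjoint U : ell2 →L[ℂ] K) : ell2 →ₗ[ℂ] K)) := by
  obtain ⟨A, B, hA, hB, hAB⟩ := hf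
  obtain ⟨C, hC, hCx⟩ := T.exists_preimage_norm_le hT
  -- key: inner identity
  have key : ∀ (y : K) (n : ℕ), ⟪y, T (f n)⟫_ℂ = ⟪(ContinuousLinearMap.adjoint T) y, f n⟫_ℂ := by
    intro y n
    rw [ContinuousLinearMap.adjoint_inner_left]
  -- lower bound on ‖T* y‖
  have hlow : ∀ y : K, ‖y‖ ≤ C * ‖(ContinuousLinearMap.adjoint T) y‖ := by
    intro y
    obtain ⟨x, hx, hxn⟩ := hCx y
    have h1 : (‖y‖ : ℂ) ^ 2 = ⟪y, y⟫_ℂ := (inner_self_eq_norm_sq_to_K y).symm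
    have h2 : ⟪y, y⟫_ℂ = ⟪(ContinuousLinearMap.adjoint T) y, x⟫_ℂ := by
      rw [ContinuousLinearMap.adjoint_inner_left, hx]
    have h3 : ‖y‖ ^ 2 ≤ ‖(ContinuousLinearMap.adjoint T) y‖ * ‖x‖ := by
      calc ‖y‖ ^ 2 = ‖(‖y‖ : ℂ) ^ 2‖ := by
            simp [abs_of_nonneg (norm_nonneg y)]
        _ = ‖⟪(ContinuousLinearMap.adjoint T) y, x⟫_ℂ‖ := by rw [h1, h2]
        _ ≤ ‖(ContinuousLinearMap.adjoint T) y‖ * ‖x‖ := norm_inner_le_norm _ _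
    have h4 : ‖y‖ ^ 2 ≤ ‖(ContinuousLinearMap.adjoint T) y‖ * (C * ‖y‖) := by
      calc ‖y‖ ^ 2 ≤ ‖(ContinuousLinearMap.adjoint T) y‖ * ‖x‖ := h3
        _ ≤ ‖(ContinuousLinearMap.adjoint T) y‖ * (C * ‖y‖) := by
            apply mul_le_mul_of_nonneg_left hxn (norm_nonneg _)
    rcases eq_or_lt_of_le (norm_nonneg y) with h | h
    · rw [← h]; positivity
    · nlinarith [norm_nonneg ((ContinuousLinearMap.adjoint T) y)]
  refine ⟨⟨A / C ^ 2, B * (‖T‖ + 1) ^ 2, by positivity, by positivity, ?_⟩, ?_, ?_⟩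
  · intro y
    have hsum : ∑' n, ‖⟪y, T (f n)⟫_ℂ‖ ^ 2
        = ∑' n, ‖⟪(ContinuousLinearMap.adjoint T) y, f n⟫_ℂ‖ ^ 2 := by
      congr 1; ext n; rw [key]
    obtain ⟨hl, hr⟩ := hAB ((ContinuousLinearMap.adjoint T) y)
    constructor
    · rw [hsum]
      refine le_trans ?_ hl
      rw [div_mul_eq_mul_div, div_le_iff₀ (by positivity)]
      have h2 : ‖y‖ ^ 2 ≤ (C * ‖(ContinuousLinearMap.adjoint T) y‖) ^ 2 :=
        pow_le_pow_left₀ (norm_nonneg y) (hlow y) 2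
      calc A * ‖y‖ ^ 2 ≤ A * (C * ‖(ContinuousLinearMap.adjoint T) y‖) ^ 2 :=
            mul_le_mul_of_nonneg_left h2 hA.le
        _ = A * ‖(ContinuousLinearMap.adjoint T) y‖ ^ 2 * C ^ 2 := by ring
    · rw [hsum]
      refine le_trans hr ?_
      have hn : ‖(ContinuousLinearMap.adjoint T) y‖ ≤ (‖T‖ + 1) * ‖y‖ := by
        calc ‖(ContinuousLinearMap.adjoint T) y‖ ≤ ‖ContinuousLinearMap.adjoint T‖ * ‖y‖ :=
              (ContinuousLinearMap.adjoint T).le_opNorm y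
          _ ≤ (‖T‖ + 1) * ‖y‖ := by
              apply mul_le_mul_of_nonneg_right _ (norm_nonneg y)
              rw [ContinuousLinearMap.adjoint.norm_map T]; linarith
      have h2 : ‖(ContinuousLinearMap.adjoint T) y‖ ^ 2 ≤ ((‖T‖ + 1) * ‖y‖) ^ 2 :=
        pow_le_pow_left₀ (norm_nonneg _) hn 2
      calc B * ‖(ContinuousLinearMap.adjoint T) y‖ ^ 2
          ≤ B * ((‖T‖ + 1) * ‖y‖) ^ 2 := mul_le_mul_of_nonneg_left h2 hB.le
        _ = B * (‖T‖ + 1) ^ 2 * ‖y‖ ^ 2 := by ring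
  · intro y n
    have := hU ((ContinuousLinearMap.adjoint T) y) n
    simpa [key y n] using this
  · apply Submodule.rank_mono
    intro x hx
    simp only [LinearMap.mem_ker] at hx ⊢
    simp [ContinuousLinearMap.coe_comp', Function.comp, hx]
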